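/- For an LRU cache, if b₀, ..., b_{n−1} are pairwise distinct blocks with n ≤ A, then after accessing them in order from any cache state c, the resulting state assigns age n−1−i to block bᵢ for every i < n. The same holds for FIFO provided each access bᵢ is a miss in the state reached just before it. -/
import Mathlib


/-- LRU update: accessed block gets age 0; blocks younger than it (or all cached
blocks on a miss) age by one; other blocks are unchanged. -/
def updLRU (A : ℕ) (b : ℕ) (c : ℕ → ℕ) : ℕ → ℕ := fun b' =>
  if b' = b then 0 else if c b' < min (c b) A then c b' + 1 else c b'

/-- FIFO update: hits leave the state unchanged; on a miss the accessed block gets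
age 0 and cached blocks age by one (the oldest is evicted). -/
def updFIFO (A : ℕ) (b : ℕ) (c : ℕ → ℕ) : ℕ → ℕ :=
  if c b < A then c
  else fun b' => if b' = b then 0 else if c b' < A then c b' + 1 else c b'

/-- Generic permutation-policy update with permutation function `P`:
on a hit, ages of cached blocks are permuted by `P (c b)`; on a miss the accessed
block gets age 0 and cached blocks age by one. -/
def updPerm (P : ℕ → ℕ → ℕ) (A : ℕ) (b : ℕ) (c : ℕ → ℕ) : ℕ → ℕ :=
  if c b < A then fun b' => if c b' < A then P (c b) (c b') else c b'
  else fun b' => if b' = b then 0 else if c b' < A then c b' + 1 else c b'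

/-- The PLRU permutation function. -/
def piPLRU (a a' : ℕ) : ℕ :=
  if _h1 : a' = a then 0
  else if _h2 : a % 2 = 0 ∧ a' % 2 = 1 then a'
  else if _h3 : a % 2 = 1 ∧ a' % 2 = 0 then a' + 1
  else 2 * piPLRU (a / 2) (a' / 2)
termination_by a + a'
decreasing_by omega

/-- The PLRU update. -/
def updPLRU (A : ℕ) : ℕ → (ℕ → ℕ) → (ℕ → ℕ) := updPerm piPLRU A

/-- Sequential application of the update function along a trace of accesses. -/
def updTrace (upd : ℕ → (ℕ → ℕ) → (ℕ → ℕ)) : List ℕ → (ℕ → ℕ) → (ℕ → ℕ)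
  | [], c => c
  | b :: t, c => updTrace upd t (upd b c)

/-- States reachable from `c₀` using traces over the set of blocks `B`. -/
def Reach (upd : ℕ → (ℕ → ℕ) → (ℕ → ℕ)) (B : Set ℕ) (c₀ : ℕ → ℕ) : Set (ℕ → ℕ) :=
  {c | ∃ t : List ℕ, (∀ b ∈ t, b ∈ B) ∧ updTrace upd t c₀ = c}

/-- Cache state invariant: ages are at most `A`, and distinct blocks have distinct
ages unless both have age `A` (uncached). -/
def CacheInv (A : ℕ) (c : ℕ → ℕ) : Prop :=
  (∀ b, c b ≤ A) ∧ ∀ b b', c b < A → c b = c b' → b = b'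

/-- `c` is filled with `B`: the blocks of `B` occupy the youngest ages
`{0, …, min (A, |B|−1)}`, and all remaining cache lines are occupied
(by attacker blocks). -/
def FilledWith (A : ℕ) (c : ℕ → ℕ) (B : Finset ℕ) : Prop :=
  CacheInv A c ∧ (∀ a, a < A → ∃ b, c b = a) ∧
    c '' ↑B = Set.Iio (min (A + 1) B.card)

/-- `c` is empty w.r.t. `B`: no block of `B` is cached, and all cache lines are
occupied (by attacker blocks). -/
def EmptyWith (A : ℕ) (c : ℕ → ℕ) (B : Finset ℕ) : Prop :=
  CacheInv A c ∧ (∀ b ∈ B, c b = A) ∧ (∀ a, a < A → ∃ b, c b = a)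


lemma updTrace_append (upd : ℕ → (ℕ → ℕ) → (ℕ → ℕ)) (t1 t2 : List ℕ) (c : ℕ → ℕ) :
    updTrace upd (t1 ++ t2) c = updTrace upd t2 (updTrace upd t1 c) := by
  induction t1 generalizing c with
  | nil => rfl
  | cons b t ih => simp [updTrace, ih]

lemma cacheInv_step (A m b : ℕ) (c : ℕ → ℕ) (hm : m ≤ A)
    (hb : ∀ b', c b' = m → m < A → b' = b) (h : CacheInv A c) :
    CacheInv A (fun b' => if b' = b then 0 else if c b' < m then c b' + 1 else c b') := by
  obtain ⟨h1, h2⟩ := h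
  constructor
  · intro b'
    show (if b' = b then 0 else if c b' < m then c b' + 1 else c b') ≤ A
    by_cases hbb : b' = b
    · rw [if_pos hbb]; omega
    · rw [if_neg hbb]; have := h1 b'; split <;> omega
  · intro x y hx hxy
    change (if x = b then 0 else if c x < m then c x + 1 else c x) < A at hx
    change (if x = b then 0 else if c x < m then c x + 1 else c x) =
      (if y = b then 0 else if c y < m then c y + 1 else c y) at hxy
    by_cases hxb : x = b
    · by_cases hyb : y = b
      · rw [hxb, hyb]
      · exfalso
        rw [hxb, if_pos rfl] at hx hxy
        rw [if_neg hyb] at hxy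
        by_cases hcy : c y < m
        · rw [if_pos hcy] at hxy; omega
        · rw [if_neg hcy] at hxy
          exact hyb (hb y (by omega) (by omega))
    · rw [if_neg hxb] at hx hxy
      by_cases hyb : y = b
      · exfalso
        rw [hyb, if_pos rfl] at hxy
        by_cases hcx : c x < m
        · rw [if_pos hcx] at hxy; omega
        · rw [if_neg hcx] at hx hxy
          exact hxb (hb x (by omega) (by omega))
      · rw [if_neg hyb] at hxy
        by_cases hcx : c x < m <;> by_cases hcy : c y < m
        · rw [if_pos hcx] at hx hxy; rw [if_pos hcy] at hxy
          exact h2 x y (by omega) (by omega)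
        · rw [if_pos hcx] at hx hxy; rw [if_neg hcy] at hxy
          exact absurd (hb y (by omega) (by omega)) hyb
        · rw [if_neg hcx] at hx hxy; rw [if_pos hcy] at hxy
          exact absurd (hb x (by omega) (by omega)) hxb
        · rw [if_neg hcx] at hx hxy; rw [if_neg hcy] at hxy
          exact h2 x y hx hxy

lemma cacheInv_updLRU (A b : ℕ) (c : ℕ → ℕ) (h : CacheInv A c) :
    CacheInv A (updLRU A b c) := by
  exact cacheInv_step A (min (c b) A) b c (by omega)
    (fun b' h' hlt => h.2 b' b (by omega) (by omega)) h

lemma cacheInv_updFIFO (A b : ℕ) (c : ℕ → ℕ) (h : CacheInv A c) :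
    CacheInv A (updFIFO A b c) := by
  unfold updFIFO
  split
  · exact h
  · exact cacheInv_step A A b c le_rfl (fun b' _ h' => absurd h' (lt_irrefl A)) h

lemma cacheInv_updTrace (A : ℕ) (upd : ℕ → (ℕ → ℕ) → (ℕ → ℕ))
    (hpres : ∀ b c, CacheInv A c → CacheInv A (upd b c))
    (t : List ℕ) (c : ℕ → ℕ) (h : CacheInv A c) : CacheInv A (updTrace upd t c) := by
  induction t generalizing c with
  | nil => exact h
  | cons b t ih => exact ih _ (hpres b c h)

lemma ages_core (A : ℕ) (upd : ℕ → (ℕ → ℕ) → (ℕ → ℕ)) (Extra : (ℕ → ℕ) → ℕ → Prop)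
    (hpres : ∀ b c, CacheInv A c → CacheInv A (upd b c))
    (hstep : ∀ c b, CacheInv A c → Extra c b →
      upd b c b = 0 ∧ ∀ b', b' ≠ b → c b' < A → c b' < c b → upd b c b' = c b' + 1)
    (bs : List ℕ) (c : ℕ → ℕ) (hinv : CacheInv A c) (hnd : bs.Nodup)
    (hlen : bs.length ≤ A)
    (hmiss : ∀ i (h : i < bs.length), Extra (updTrace upd (bs.take i) c) bs[i]) :
    ∀ i (h : i < bs.length), updTrace upd bs c bs[i] = bs.length - 1 - i := by
  induction bs using List.reverseRecOn with
  | nil => intro i h; simp at h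
  | append_singleton l b ih =>
    have hndl : l.Nodup := hnd.of_append_left
    have hbl : b ∉ l := by
      intro hmem
      exact List.disjoint_of_nodup_append hnd hmem (by simp)
    have hlenl : l.length < A := by simp at hlen; omega
    set c' := updTrace upd l c with hc'def
    have hc' : CacheInv A c' := cacheInv_updTrace A upd hpres l c hinv
    have hgb : (l ++ [b])[l.length]'(by simp) = b := by simp
    have ihl : ∀ i (h : i < l.length), c' l[i] = l.length - 1 - i := by
      apply ih hndl (by omega)
      intro i h
      have := hmiss i (by simp; omega)
      rwa [List.take_append_of_le_length (by omega), List.getElem_append_left h] at this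
    have hE : Extra c' b := by
      have := hmiss l.length (by simp)
      rwa [List.take_append_of_le_length le_rfl, List.take_length, hgb] at this
    obtain ⟨hz, hincr⟩ := hstep c' b hc' hE
    have hbge : ¬ c' b < l.length := by
      intro hlt
      have hj : c' (l[l.length - 1 - c' b]'(by omega)) = c' b := by
        rw [ihl _ (by omega)]; omega
      have := hc'.2 b _ (by omega) hj.symm
      exact hbl (this ▸ List.getElem_mem _)
    have hupd : updTrace upd (l ++ [b]) c = upd b c' := by
      rw [updTrace_append]; rfl
    intro i h
    rw [hupd]
    simp only [List.length_append, List.length_singleton] at h ⊢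
    by_cases hi : i < l.length
    · rw [List.getElem_append_left hi]
      have hx := ihl i hi
      have hxb : l[i] ≠ b := fun he => hbl (he ▸ List.getElem_mem _)
      rw [hincr l[i] hxb (by omega) (by omega), hx]
      omega
    · have hi' : i = l.length := by omega
      subst hi'
      rw [hgb, hz]
      omega

/-- For an LRU cache, accessing `n ≤ A` pairwise distinct blocks `bs` in order
from any cache state leaves block `bs i` at age `n−1−i`. The same holds for FIFO
provided each access is a miss in the state reached just before it. -/
theorem access_sequence_ages (A : ℕ) (bs : List ℕ) (c : ℕ → ℕ)
    (hinv : CacheInv A c) (hnd : bs.Nodup) (hlen : bs.length ≤ A) :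
    (∀ i (h : i < bs.length),
      updTrace (updLRU A) bs c (bs.get ⟨i, h⟩) = bs.length - 1 - i) ∧
    ((∀ i (h : i < bs.length),
        updTrace (updFIFO A) (bs.take i) c (bs.get ⟨i, h⟩) = A) →
      ∀ i (h : i < bs.length),
        updTrace (updFIFO A) bs c (bs.get ⟨i, h⟩) = bs.length - 1 - i) := by
  constructor
  · intro i h
    have := ages_core A (updLRU A) (fun _ _ => True)
      (fun b c h => cacheInv_updLRU A b c h)
      (fun c b hc _ => by
        refine ⟨by simp [updLRU], fun b' hne h1 h2 => ?_⟩
        unfold updLRU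
        rw [if_neg hne, if_pos (by omega)])
      bs c hinv hnd hlen (fun _ _ => trivial) i h
    simpa using this
  · intro hm i h
    have := ages_core A (updFIFO A) (fun c b => c b = A)
      (fun b c h => cacheInv_updFIFO A b c h)
      (fun c b hc hE => by
        unfold updFIFO
        rw [if_neg (by omega)]
        refine ⟨by simp, fun b' hne h1 h2 => ?_⟩
        rw [if_neg hne, if_pos h1])
      bs c hinv hnd hlen (fun i h => by simpa using hm i h) i h
    simpa using this
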